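/- arXiv:1904.09417 — 5 statements merged into one kernel-verified Lean document; each statement's English description precedes it below -/
import Mathlib

section
/- Let f : [0,1] → ℝ be continuous with f(0), f(1) ∈ ℤ, and let n ≥ 1. Then for every x ∈ [0,1], |B̂_n(f)(x) - B_n f(x)| ≤ 1/(2n), where B_n f(x) = Σ_{k=0}^n f(k/n) C(n,k) x^k (1-x)^{n-k} and B̂_n(f)(x) = Σ_{k=0}^n ⟨f(k/n) C(n,k)⟩ x^k (1-x)^{n-k}. -/
lemma le_choose_of_mid : ∀ n k : ℕ, 1 ≤ k → k < n → n ≤ n.choose k := by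
  intro n
  induction n with
  | zero => intro k h1 h2; omega
  | succ m ih =>
    intro k h1 h2
    rcases eq_or_lt_of_le h1 with h | h
    · simp [← h, Nat.choose_one_right]
    rcases eq_or_lt_of_le (Nat.le_of_lt_succ h2) with h' | h'
    · have : (m + 1).choose k = (m + 1).choose (m + 1 - k) := (Nat.choose_symm (by omega)).symm
      rw [this, h', Nat.add_sub_cancel_left, Nat.choose_one_right]
    · obtain ⟨j, rfl⟩ : ∃ j, k = j + 1 := ⟨k - 1, by omega⟩
      rw [Nat.choose_succ_succ, Nat.succ_eq_add_one] at *
      have h1' : m ≤ m.choose j := ih j (by omega) (by omega)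
      have h2' : 1 ≤ m.choose (j + 1) := Nat.choose_pos (by omega)
      omega

theorem round_bernstein_close (f : ℝ → ℝ) (hf : ContinuousOn f (Set.Icc 0 1))
    (h0 : ∃ m : ℤ, f 0 = (m : ℝ)) (h1 : ∃ m : ℤ, f 1 = (m : ℝ))
    (n : ℕ) (hn : 1 ≤ n) (x : ℝ) (hx : x ∈ Set.Icc (0 : ℝ) 1) :
    |(∑ k ∈ Finset.range (n + 1),
        ((round (f ((k : ℝ) / n) * (n.choose k : ℝ)) : ℝ)) * x ^ k * (1 - x) ^ (n - k)) -
      (∑ k ∈ Finset.range (n + 1),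
        f ((k : ℝ) / n) * (n.choose k : ℝ) * x ^ k * (1 - x) ^ (n - k))| ≤ 1 / (2 * n) := by
  obtain ⟨m0, hm0⟩ := h0
  obtain ⟨m1, hm1⟩ := h1
  obtain ⟨hx0, hx1⟩ := hx
  have hx1' : (0:ℝ) ≤ 1 - x := by linarith
  have hn0 : (n : ℝ) ≠ 0 := Nat.cast_ne_zero.mpr (by omega)
  have hnpos : (0:ℝ) < n := by positivity
  have key : ∀ k ∈ Finset.range (n + 1),
      |((round (f ((k : ℝ) / n) * (n.choose k : ℝ)) : ℝ)) * x ^ k * (1 - x) ^ (n - k) -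
        f ((k : ℝ) / n) * (n.choose k : ℝ) * x ^ k * (1 - x) ^ (n - k)|
      ≤ (1 / (2 * n)) * ((n.choose k : ℝ) * x ^ k * (1 - x) ^ (n - k)) := by
    intro k hk
    rw [Finset.mem_range] at hk
    have hp : (0:ℝ) ≤ x ^ k * (1 - x) ^ (n - k) := by positivity
    have habs : |((round (f ((k : ℝ) / n) * (n.choose k : ℝ)) : ℝ)) * x ^ k * (1 - x) ^ (n - k) -
        f ((k : ℝ) / n) * (n.choose k : ℝ) * x ^ k * (1 - x) ^ (n - k)|
        = |((round (f ((k : ℝ) / n) * (n.choose k : ℝ)) : ℝ)) - f ((k : ℝ) / n) * (n.choose k : ℝ)|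
          * (x ^ k * (1 - x) ^ (n - k)) := by
      rw [← abs_of_nonneg hp, ← abs_mul]
      ring_nf
    rw [habs]
    rcases eq_or_ne k 0 with rfl | hk0
    · have : f ((0 : ℕ) / (n:ℝ)) * (n.choose 0 : ℝ) = (m0 : ℝ) := by
        simp [hm0]
      rw [this, round_intCast]
      simp [abs_nonneg]
      positivity
    rcases eq_or_ne k n with rfl | hkn
    · have : f ((k : ℝ) / (k:ℝ)) * (k.choose k : ℝ) = (m1 : ℝ) := by
        rw [Nat.choose_self]
        push_cast
        rw [div_self hn0, hm1]
        ring
      rw [this, round_intCast]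
      simp [abs_nonneg]
      positivity
    · -- middle terms
      have hch : (n : ℝ) ≤ (n.choose k : ℝ) := by
        exact_mod_cast le_choose_of_mid n k (by omega) (by omega)
      have h12 : |((round (f ((k : ℝ) / n) * (n.choose k : ℝ)) : ℝ)) -
          f ((k : ℝ) / n) * (n.choose k : ℝ)| ≤ 1 / 2 := by
        rw [abs_sub_comm]
        exact abs_sub_round _
      calc |((round (f ((k : ℝ) / n) * (n.choose k : ℝ)) : ℝ)) -
            f ((k : ℝ) / n) * (n.choose k : ℝ)| * (x ^ k * (1 - x) ^ (n - k))
          ≤ (1 / 2) * (x ^ k * (1 - x) ^ (n - k)) := by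
            exact mul_le_mul_of_nonneg_right h12 hp
        _ ≤ (1 / (2 * n)) * ((n.choose k : ℝ) * x ^ k * (1 - x) ^ (n - k)) := by
            rw [show (1 / (2 * (n:ℝ))) * ((n.choose k : ℝ) * x ^ k * (1 - x) ^ (n - k))
              = ((n.choose k : ℝ) / n) * ((1/2) * (x ^ k * (1 - x) ^ (n - k))) by ring]
            have h1le : (1:ℝ) ≤ (n.choose k : ℝ) / n := (one_le_div hnpos).mpr hch
            nlinarith [mul_nonneg (le_of_lt (by norm_num : (0:ℝ) < 1/2)) hp]
  calc |(∑ k ∈ Finset.range (n + 1),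
        ((round (f ((k : ℝ) / n) * (n.choose k : ℝ)) : ℝ)) * x ^ k * (1 - x) ^ (n - k)) -
      (∑ k ∈ Finset.range (n + 1),
        f ((k : ℝ) / n) * (n.choose k : ℝ) * x ^ k * (1 - x) ^ (n - k))|
      = |∑ k ∈ Finset.range (n + 1),
        (((round (f ((k : ℝ) / n) * (n.choose k : ℝ)) : ℝ)) * x ^ k * (1 - x) ^ (n - k) -
          f ((k : ℝ) / n) * (n.choose k : ℝ) * x ^ k * (1 - x) ^ (n - k))| := by
        rw [Finset.sum_sub_distrib]
    _ ≤ ∑ k ∈ Finset.range (n + 1),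
        |((round (f ((k : ℝ) / n) * (n.choose k : ℝ)) : ℝ)) * x ^ k * (1 - x) ^ (n - k) -
          f ((k : ℝ) / n) * (n.choose k : ℝ) * x ^ k * (1 - x) ^ (n - k)| :=
        Finset.abs_sum_le_sum_abs _ _
    _ ≤ ∑ k ∈ Finset.range (n + 1),
        (1 / (2 * n)) * ((n.choose k : ℝ) * x ^ k * (1 - x) ^ (n - k)) :=
        Finset.sum_le_sum key
    _ = (1 / (2 * n)) * ∑ k ∈ Finset.range (n + 1),
        (x ^ k * (1 - x) ^ (n - k) * (n.choose k : ℝ)) := by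
        rw [← Finset.mul_sum]; exact congrArg _ (Finset.sum_congr rfl fun k _ => by ring)
    _ = 1 / (2 * n) := by
        rw [← add_pow]
        simp
end

section
/- Let f : [0,1] → ℝ be continuous with f(0), f(1) ∈ ℤ, and let n ≥ 1. Then for every x ∈ [0,1], |B̃_n(f)(x) - B_n f(x)| ≤ 1/n, where B̃_n(f)(x) = Σ_{k=0}^n ⌊f(k/n) C(n,k)⌋ x^k (1-x)^{n-k}. -/
lemma le_choose_aux (n k : ℕ) (h1 : 1 ≤ k) (h2 : k < n) : n ≤ n.choose k := by
  induction n with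
  | zero => omega
  | succ n ih =>
    obtain ⟨j, rfl⟩ : ∃ j, k = j + 1 := ⟨k - 1, by omega⟩
    rcases Nat.eq_zero_or_pos j with rfl | hj
    · simp [Nat.choose_one_right]
    rcases eq_or_lt_of_le (Nat.lt_succ_iff.mp h2) with rfl | hkn
    · rw [Nat.choose_succ_self_right]
    · have h3 := ih (by omega)
      have h4 : 0 < n.choose j := Nat.choose_pos (by omega)
      rw [Nat.choose_succ_succ, Nat.succ_eq_add_one]
      omega

theorem floor_bernstein_close (f : ℝ → ℝ) (hf : ContinuousOn f (Set.Icc 0 1))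
    (h0 : ∃ m : ℤ, f 0 = (m : ℝ)) (h1 : ∃ m : ℤ, f 1 = (m : ℝ))
    (n : ℕ) (hn : 1 ≤ n) (x : ℝ) (hx : x ∈ Set.Icc (0 : ℝ) 1) :
    |(∑ k ∈ Finset.range (n + 1),
        ((⌊f ((k : ℝ) / n) * (n.choose k : ℝ)⌋ : ℝ)) * x ^ k * (1 - x) ^ (n - k)) -
      (∑ k ∈ Finset.range (n + 1),
        f ((k : ℝ) / n) * (n.choose k : ℝ) * x ^ k * (1 - x) ^ (n - k))| ≤ 1 / n := by
  obtain ⟨m0, hm0⟩ := h0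
  obtain ⟨m1, hm1⟩ := h1
  obtain ⟨hx0, hx1⟩ := hx
  have hnR : (0 : ℝ) < n := by positivity
  rw [← Finset.sum_sub_distrib]
  refine (Finset.abs_sum_le_sum_abs _ _).trans ?_
  have key : ∀ k ∈ Finset.range (n + 1),
      |(⌊f ((k : ℝ) / n) * (n.choose k : ℝ)⌋ : ℝ) * x ^ k * (1 - x) ^ (n - k) -
        f ((k : ℝ) / n) * (n.choose k : ℝ) * x ^ k * (1 - x) ^ (n - k)| ≤
      ((n.choose k : ℝ) / n) * (x ^ k * (1 - x) ^ (n - k)) := by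
    intro k hk
    rw [Finset.mem_range] at hk
    set a := f ((k : ℝ) / n) * (n.choose k : ℝ) with ha
    have h1x : (0 : ℝ) ≤ 1 - x := by linarith
    have hB : (0 : ℝ) ≤ x ^ k * (1 - x) ^ (n - k) :=
      mul_nonneg (pow_nonneg hx0 k) (pow_nonneg h1x (n - k))
    have hrw : (⌊a⌋ : ℝ) * x ^ k * (1 - x) ^ (n - k) - a * x ^ k * (1 - x) ^ (n - k)
        = ((⌊a⌋ : ℝ) - a) * (x ^ k * (1 - x) ^ (n - k)) := by ring
    rw [hrw, abs_mul, abs_of_nonneg hB]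
    rcases Nat.eq_zero_or_pos k with rfl | hk1
    · have : a = (m0 : ℝ) := by simp [ha, hm0]
      rw [this, Int.floor_intCast, sub_self, abs_zero, zero_mul]
      exact mul_nonneg (by positivity) hB
    rcases eq_or_lt_of_le (Nat.lt_succ_iff.mp hk) with rfl | hk2
    · have : a = (m1 : ℝ) := by
        simp [ha, div_self (ne_of_gt hnR), hm1]
      rw [this, Int.floor_intCast, sub_self, abs_zero, zero_mul]
      exact mul_nonneg (by positivity) hB
    · have hfl : |(⌊a⌋ : ℝ) - a| ≤ 1 := by
        have h5 := Int.floor_le a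
        have h6 := Int.lt_floor_add_one a
        rw [abs_le]; constructor <;> linarith
      have hch : (n : ℝ) ≤ (n.choose k : ℝ) := by
        exact_mod_cast le_choose_aux n k hk1 hk2
      have : (1 : ℝ) ≤ (n.choose k : ℝ) / n := (one_le_div hnR).mpr hch
      calc |(⌊a⌋ : ℝ) - a| * (x ^ k * (1 - x) ^ (n - k))
          ≤ 1 * (x ^ k * (1 - x) ^ (n - k)) := by
            exact mul_le_mul_of_nonneg_right hfl hB
        _ ≤ ((n.choose k : ℝ) / n) * (x ^ k * (1 - x) ^ (n - k)) := by
            exact mul_le_mul_of_nonneg_right this hB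
  refine (Finset.sum_le_sum key).trans ?_
  have hsum : ∑ k ∈ Finset.range (n + 1),
      ((n.choose k : ℝ) / n) * (x ^ k * (1 - x) ^ (n - k))
      = (1 / n) * ∑ k ∈ Finset.range (n + 1),
          x ^ k * (1 - x) ^ (n - k) * (n.choose k : ℝ) := by
    rw [Finset.mul_sum]; apply Finset.sum_congr rfl; intro k _; ring
  rw [hsum, ← add_pow x (1 - x) n]
  simp
end

section
/- Let f : [0,1] → ℝ be continuous with f(0), f(1) ∈ ℤ and fix δ ∈ (0, 1/2). Then for all x ∈ [δ, 1-δ] and n ≥ 1, |B_n f(x) - B̂_n(f)(x)| ≤ ((n-1)/2)·(1-δ)^n, where B̂_n(f)(x) = Σ_{k=0}^n ⟨f(k/n)C(n,k)⟩ x^k (1-x)^{n-k}. -/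
theorem round_bernstein_geometric (f : ℝ → ℝ) (hf : ContinuousOn f (Set.Icc 0 1))
    (h0 : ∃ m : ℤ, f 0 = (m : ℝ)) (h1 : ∃ m : ℤ, f 1 = (m : ℝ))
    (δ : ℝ) (hδ0 : 0 < δ) (hδ1 : δ < 1 / 2)
    (x : ℝ) (hx : x ∈ Set.Icc δ (1 - δ)) (n : ℕ) (hn : 1 ≤ n) :
    |(∑ k ∈ Finset.range (n + 1),
        f ((k : ℝ) / n) * (n.choose k : ℝ) * x ^ k * (1 - x) ^ (n - k)) -
      (∑ k ∈ Finset.range (n + 1),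
        ((round (f ((k : ℝ) / n) * (n.choose k : ℝ)) : ℝ)) * x ^ k * (1 - x) ^ (n - k))| ≤
      (((n : ℝ) - 1) / 2) * (1 - δ) ^ n := by
  obtain ⟨m0, hm0⟩ := h0
  obtain ⟨m1, hm1⟩ := h1
  obtain ⟨hxl, hxr⟩ := hx
  have hx0 : (0:ℝ) ≤ x := le_trans hδ0.le hxl
  have h1x0 : (0:ℝ) ≤ 1 - x := by linarith
  have h1xle : 1 - x ≤ 1 - δ := by linarith
  have hδnn : (0:ℝ) ≤ 1 - δ := by linarith
  have hn0 : (n:ℝ) ≠ 0 := Nat.cast_ne_zero.mpr (by omega)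
  rw [← Finset.sum_sub_distrib]
  calc |∑ k ∈ Finset.range (n + 1),
        (f ((k : ℝ) / n) * (n.choose k : ℝ) * x ^ k * (1 - x) ^ (n - k)
          - (round (f ((k : ℝ) / n) * (n.choose k : ℝ)) : ℝ) * x ^ k * (1 - x) ^ (n - k))|
      ≤ ∑ k ∈ Finset.range (n + 1),
        |f ((k : ℝ) / n) * (n.choose k : ℝ) * x ^ k * (1 - x) ^ (n - k)
          - (round (f ((k : ℝ) / n) * (n.choose k : ℝ)) : ℝ) * x ^ k * (1 - x) ^ (n - k)| :=
      Finset.abs_sum_le_sum_abs _ _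
    _ ≤ ∑ k ∈ Finset.range (n + 1),
        (if k = 0 ∨ k = n then 0 else (1/2) * (1 - δ) ^ n) := by
      apply Finset.sum_le_sum
      intro k hk
      rw [Finset.mem_range] at hk
      have hkn : k ≤ n := Nat.lt_succ_iff.mp hk
      by_cases hk0 : k = 0
      · subst hk0
        simp [hm0, round_intCast]
      by_cases hkn' : k = n
      · subst hkn'
        simp [div_self hn0, hm1, round_intCast]
      · rw [if_neg (by tauto)]
        have heq : f ((k : ℝ) / n) * (n.choose k : ℝ) * x ^ k * (1 - x) ^ (n - k)
            - (round (f ((k : ℝ) / n) * (n.choose k : ℝ)) : ℝ) * x ^ k * (1 - x) ^ (n - k)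
            = (f ((k : ℝ) / n) * (n.choose k : ℝ)
              - (round (f ((k : ℝ) / n) * (n.choose k : ℝ)) : ℝ)) * (x ^ k * (1 - x) ^ (n - k)) := by
          ring
        rw [heq, abs_mul]
        have h1 : |f ((k : ℝ) / n) * (n.choose k : ℝ)
            - (round (f ((k : ℝ) / n) * (n.choose k : ℝ)) : ℝ)| ≤ 1/2 := abs_sub_round _
        have h2 : |x ^ k * (1 - x) ^ (n - k)| ≤ (1 - δ) ^ n := by
          rw [abs_of_nonneg (mul_nonneg (pow_nonneg hx0 _) (pow_nonneg h1x0 _))]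
          calc x ^ k * (1 - x) ^ (n - k) ≤ (1 - δ) ^ k * (1 - δ) ^ (n - k) :=
                mul_le_mul (pow_le_pow_left₀ hx0 hxr k)
                  (pow_le_pow_left₀ h1x0 h1xle _) (pow_nonneg h1x0 _) (pow_nonneg hδnn _)
            _ = (1 - δ) ^ n := by rw [← pow_add]; congr 1; omega
        exact mul_le_mul h1 h2 (abs_nonneg _) (by norm_num)
    _ = (((n : ℝ) - 1) / 2) * (1 - δ) ^ n := by
      rw [Finset.sum_ite, Finset.sum_const, Finset.sum_const, smul_zero, zero_add]
      have hcard : (Finset.filter (fun k => ¬(k = 0 ∨ k = n)) (Finset.range (n+1))).card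
          = n - 1 := by
        have hset : Finset.filter (fun k => ¬(k = 0 ∨ k = n)) (Finset.range (n+1))
            = Finset.Ico 1 n := by
          ext k; simp; omega
        rw [hset, Nat.card_Ico]
      rw [hcard, nsmul_eq_mul, Nat.cast_sub hn]
      push_cast
      ring
end

section
/- Let f : [0,1] → ℝ be continuous with f(0), f(1) ∈ ℤ. If ‖B̂_n(f) - f‖_∞ = o(1/n) as n → ∞ (i.e., n·‖B̂_n(f) - f‖_∞ → 0), then f(x) = p x + q for some integers p, q. -/
open Finset

private lemma sumW (n : ℕ) (x : ℝ) :
    ∑ k ∈ range (n+1), (n.choose k : ℝ) * x^k * (1-x)^(n-k) = 1 := by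
  have h := congrArg (Polynomial.eval x) (bernsteinPolynomial.sum ℝ n)
  simpa [bernsteinPolynomial, Polynomial.eval_finset_sum] using h

private lemma sumkW (n : ℕ) (x : ℝ) :
    ∑ k ∈ range (n+1), (k:ℝ) * ((n.choose k : ℝ) * x^k * (1-x)^(n-k)) = n * x := by
  have h := congrArg (Polynomial.eval x) (bernsteinPolynomial.sum_smul ℝ n)
  simpa [bernsteinPolynomial, Polynomial.eval_finset_sum, mul_assoc] using h

private lemma sumkkW (n : ℕ) (x : ℝ) :
    ∑ k ∈ range (n+1), ((k*(k-1) : ℕ) : ℝ) * ((n.choose k : ℝ) * x^k * (1-x)^(n-k))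
      = ((n*(n-1) : ℕ) : ℝ) * x^2 := by
  have h := congrArg (Polynomial.eval x) (bernsteinPolynomial.sum_mul_smul ℝ n)
  simpa [bernsteinPolynomial, Polynomial.eval_finset_sum, mul_assoc] using h

private lemma W_nonneg {n k : ℕ} {x : ℝ} (hx : x ∈ Set.Icc (0:ℝ) 1) :
    0 ≤ (n.choose k : ℝ) * x^k * (1-x)^(n-k) := by
  have h1 : (0:ℝ) ≤ x := hx.1
  have h2 : (0:ℝ) ≤ 1 - x := by linarith [hx.2]
  positivity

private lemma sumk2W (n : ℕ) (x : ℝ) :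
    ∑ k ∈ range (n+1), (k:ℝ)^2 * ((n.choose k : ℝ) * x^k * (1-x)^(n-k))
      = ((n*(n-1) : ℕ) : ℝ) * x^2 + n * x := by
  have h : ∀ k ∈ range (n+1), (k:ℝ)^2 * ((n.choose k : ℝ) * x^k * (1-x)^(n-k))
      = ((k*(k-1) : ℕ) : ℝ) * ((n.choose k : ℝ) * x^k * (1-x)^(n-k))
        + (k:ℝ) * ((n.choose k : ℝ) * x^k * (1-x)^(n-k)) := by
    intro k _
    have hk : ((k*(k-1) : ℕ) : ℝ) = (k:ℝ)^2 - k := by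
      cases k with
      | zero => simp
      | succ m => push_cast [Nat.succ_sub_one]; ring
    rw [hk]; ring
  rw [Finset.sum_congr rfl h, Finset.sum_add_distrib, sumkkW, sumkW]

private lemma sumeW {n : ℕ} (hn : 1 ≤ n) (x : ℝ) :
    ∑ k ∈ range (n+1), ((k:ℝ)/n * (1 - (k:ℝ)/n)) * ((n.choose k : ℝ) * x^k * (1-x)^(n-k))
      = (1 - 1/n) * (x * (1-x)) := by
  have hn0 : (n:ℝ) ≠ 0 := by positivity
  have h : ∀ k ∈ range (n+1), ((k:ℝ)/n * (1 - (k:ℝ)/n)) * ((n.choose k : ℝ) * x^k * (1-x)^(n-k))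
      = (1/(n:ℝ)) * ((k:ℝ) * ((n.choose k : ℝ) * x^k * (1-x)^(n-k)))
        - (1/(n:ℝ)^2) * ((k:ℝ)^2 * ((n.choose k : ℝ) * x^k * (1-x)^(n-k))) := by
    intro k _
    field_simp
  rw [Finset.sum_congr rfl h, Finset.sum_sub_distrib, ← Finset.mul_sum, ← Finset.mul_sum,
    sumkW, sumk2W]
  have hcast : ((n*(n-1) : ℕ) : ℝ) = (n:ℝ)^2 - n := by
    cases n with
    | zero => simp
    | succ m => push_cast [Nat.succ_sub_one]; ring
  rw [hcast]
  field_simp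
  ring

/-- Expansion of the Bernstein sum of `f - (a + b·y) - ε·y(1-y)`. -/
private lemma Bn_expand {n : ℕ} (hn : 1 ≤ n) (f : ℝ → ℝ) (a b ε x : ℝ) :
    ∑ k ∈ range (n+1), (f ((k:ℝ)/n) - (a + b*((k:ℝ)/n)) - ε*(((k:ℝ)/n)*(1-(k:ℝ)/n)))
        * ((n.choose k : ℝ) * x^k * (1-x)^(n-k))
    = (∑ k ∈ range (n+1), f ((k:ℝ)/n) * ((n.choose k : ℝ) * x^k * (1-x)^(n-k)))
      - (a + b*x) - ε*((1 - 1/n) * (x*(1-x))) := by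
  have hn0 : (n:ℝ) ≠ 0 := by positivity
  have h : ∀ k ∈ range (n+1),
      (f ((k:ℝ)/n) - (a + b*((k:ℝ)/n)) - ε*(((k:ℝ)/n)*(1-(k:ℝ)/n)))
        * ((n.choose k : ℝ) * x^k * (1-x)^(n-k))
      = f ((k:ℝ)/n) * ((n.choose k : ℝ) * x^k * (1-x)^(n-k))
        - (a * ((n.choose k : ℝ) * x^k * (1-x)^(n-k))
           + (b/(n:ℝ)) * ((k:ℝ) * ((n.choose k : ℝ) * x^k * (1-x)^(n-k))))
        - ε * (((k:ℝ)/n * (1 - (k:ℝ)/n)) * ((n.choose k : ℝ) * x^k * (1-x)^(n-k))) := by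
    intro k _
    field_simp
  rw [Finset.sum_congr rfl h, Finset.sum_sub_distrib, Finset.sum_sub_distrib,
    Finset.sum_add_distrib, ← Finset.mul_sum, ← Finset.mul_sum, ← Finset.mul_sum,
    sumW, sumkW, sumeW hn]
  field_simp

private lemma round_err (f : ℝ → ℝ) (n : ℕ) {x : ℝ} (hx : x ∈ Set.Icc (0:ℝ) 1) :
    |(∑ k ∈ range (n+1), ((round (f ((k:ℝ)/n) * (n.choose k : ℝ)) : ℝ)) * x^k * (1-x)^(n-k))
      - ∑ k ∈ range (n+1), f ((k:ℝ)/n) * ((n.choose k : ℝ) * x^k * (1-x)^(n-k))|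
    ≤ (n+1) * ((1/2) * (max x (1-x))^n) := by
  set r := max x (1-x) with hr
  have hx0 : (0:ℝ) ≤ x := hx.1
  have hx1 : (0:ℝ) ≤ 1 - x := by linarith [hx.2]
  have hxr : x ≤ r := le_max_left _ _
  have hxr' : 1 - x ≤ r := le_max_right _ _
  have hr0 : (0:ℝ) ≤ r := le_trans hx0 hxr
  rw [← Finset.sum_sub_distrib]
  refine le_trans (Finset.abs_sum_le_sum_abs _ _) ?_
  have hterm : ∀ k ∈ range (n+1),
      |((round (f ((k:ℝ)/n) * (n.choose k : ℝ)) : ℝ)) * x^k * (1-x)^(n-k)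
        - f ((k:ℝ)/n) * ((n.choose k : ℝ) * x^k * (1-x)^(n-k))| ≤ (1/2) * r^n := by
    intro k hk
    have hkn : k ≤ n := Nat.lt_succ_iff.mp (Finset.mem_range.mp hk)
    set y := f ((k:ℝ)/n) * (n.choose k : ℝ) with hy
    have heq : ((round y : ℝ)) * x^k * (1-x)^(n-k)
        - f ((k:ℝ)/n) * ((n.choose k : ℝ) * x^k * (1-x)^(n-k))
        = ((round y : ℝ) - y) * (x^k * (1-x)^(n-k)) := by rw [hy]; ring
    rw [heq, abs_mul]
    have h1 : |((round y : ℝ)) - y| ≤ 1/2 := by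
      rw [abs_sub_comm]; exact abs_sub_round y
    have h2 : |x^k * (1-x)^(n-k)| ≤ r^n := by
      rw [abs_of_nonneg (by positivity)]
      calc x^k * (1-x)^(n-k) ≤ r^k * r^(n-k) := by
            exact mul_le_mul (pow_le_pow_left₀ hx0 hxr k) (pow_le_pow_left₀ hx1 hxr' (n-k))
              (by positivity) (by positivity)
        _ = r^n := by rw [← pow_add, Nat.add_sub_cancel' hkn]
    exact mul_le_mul h1 h2 (abs_nonneg _) (by norm_num)
  calc ∑ k ∈ range (n+1), |((round (f ((k:ℝ)/n) * (n.choose k : ℝ)) : ℝ)) * x^k * (1-x)^(n-k)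
        - f ((k:ℝ)/n) * ((n.choose k : ℝ) * x^k * (1-x)^(n-k))|
      ≤ (range (n+1)).card • ((1/2) * r^n) := Finset.sum_le_card_nsmul _ _ _ hterm
    _ = (n+1) * ((1/2) * r^n) := by
        rw [Finset.card_range, nsmul_eq_mul]; push_cast; ring

/-- The true Bernstein sums converge at rate o(1/n) at interior points. -/
private lemma Bn_limit (f : ℝ → ℝ)
    (hlittle : ∀ ε > 0, ∃ N : ℕ, ∀ n ≥ N, ∀ x ∈ Set.Icc (0 : ℝ) 1,
      (n : ℝ) * |(∑ k ∈ Finset.range (n + 1),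
        ((round (f ((k : ℝ) / n) * (n.choose k : ℝ)) : ℝ)) * x ^ k * (1 - x) ^ (n - k)) - f x| ≤ ε)
    {x0 : ℝ} (hx0 : x0 ∈ Set.Ioo (0:ℝ) 1) {η : ℝ} (hη : 0 < η) :
    ∃ n : ℕ, 1 ≤ n ∧
      |(n:ℝ) * ((∑ k ∈ range (n+1), f ((k:ℝ)/n) * ((n.choose k:ℝ) * x0^k * (1-x0)^(n-k)))
        - f x0)| ≤ η := by
  set r := max x0 (1-x0) with hr
  have h0 : (0:ℝ) < x0 := hx0.1
  have h1 : x0 < 1 := hx0.2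
  have hr0 : (0:ℝ) ≤ r := le_trans h0.le (le_max_left _ _)
  have hr1 : r < 1 := max_lt h1 (by linarith)
  have htend : Filter.Tendsto (fun n : ℕ => (n:ℝ)^2 * r^n) Filter.atTop (nhds 0) :=
    tendsto_pow_const_mul_const_pow_of_lt_one 2 hr0 hr1
  have hev : ∀ᶠ n : ℕ in Filter.atTop, (n:ℝ)^2 * r^n < η/2 := by
    have := htend.eventually (gt_mem_nhds (show (0:ℝ) < η/2 by linarith))
    exact this
  obtain ⟨M, hM⟩ := Filter.eventually_atTop.mp hev
  obtain ⟨N, hN⟩ := hlittle (η/2) (by linarith)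
  refine ⟨max (max N M) 1, le_max_right _ _, ?_⟩
  set n := max (max N M) 1 with hn
  have hn1 : 1 ≤ n := le_max_right _ _
  have hnN : N ≤ n := le_trans (le_max_left _ _) (le_max_left _ _)
  have hnM : M ≤ n := le_trans (le_max_right _ _) (le_max_left _ _)
  have hnR : (1:ℝ) ≤ (n:ℝ) := by exact_mod_cast hn1
  have hx0I : x0 ∈ Set.Icc (0:ℝ) 1 := ⟨h0.le, h1.le⟩
  have hA := hN n hnN x0 hx0I
  have hB := round_err f n hx0I
  have hC := hM n hnM
  set S := ∑ k ∈ range (n+1), f ((k:ℝ)/n) * ((n.choose k:ℝ) * x0^k * (1-x0)^(n-k)) with hS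
  set T := ∑ k ∈ range (n+1),
      ((round (f ((k:ℝ)/n) * (n.choose k : ℝ)) : ℝ)) * x0^k * (1-x0)^(n-k) with hT
  have htri : |S - f x0| ≤ |T - S| + |T - f x0| := by
    have : S - f x0 = -(T - S) + (T - f x0) := by ring
    rw [this]
    exact le_trans (abs_add_le _ _) (by rw [abs_neg])
  have hmul : (n:ℝ) * |S - f x0| ≤ (n:ℝ) * |T - S| + (n:ℝ) * |T - f x0| := by
    have := mul_le_mul_of_nonneg_left htri (by positivity : (0:ℝ) ≤ (n:ℝ))
    linarith [this]
  have hTS : (n:ℝ) * |T - S| ≤ (n:ℝ)^2 * r^n := by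
    have hrn : (0:ℝ) ≤ r^n := by positivity
    have hb : (n:ℝ) * ((n+1) * ((1/2) * r^n)) ≤ (n:ℝ)^2 * r^n := by
      have key : ((n:ℝ)+1) * r^n ≤ 2*(n:ℝ) * r^n :=
        mul_le_mul_of_nonneg_right (by linarith) hrn
      calc (n:ℝ) * ((n+1) * ((1/2) * r^n)) = (n:ℝ)/2 * (((n:ℝ)+1) * r^n) := by ring
        _ ≤ (n:ℝ)/2 * (2*(n:ℝ) * r^n) := by
            apply mul_le_mul_of_nonneg_left key (by positivity)
        _ = (n:ℝ)^2 * r^n := by ring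
    calc (n:ℝ) * |T - S| ≤ (n:ℝ) * ((n+1) * ((1/2) * r^n)) :=
          mul_le_mul_of_nonneg_left hB (by positivity)
      _ ≤ (n:ℝ)^2 * r^n := hb
  rw [abs_mul, abs_of_nonneg (by positivity : (0:ℝ) ≤ (n:ℝ))]
  calc (n:ℝ) * |S - f x0| ≤ (n:ℝ) * |T - S| + (n:ℝ) * |T - f x0| := hmul
    _ ≤ (n:ℝ)^2 * r^n + η/2 := add_le_add hTS hA
    _ ≤ η/2 + η/2 := by linarith [hC]
    _ = η := by ring

theorem round_bernstein_saturation (f : ℝ → ℝ) (hf : ContinuousOn f (Set.Icc 0 1))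
    (h0 : ∃ m : ℤ, f 0 = (m : ℝ)) (h1 : ∃ m : ℤ, f 1 = (m : ℝ))
    (hlittle : ∀ ε > 0, ∃ N : ℕ, ∀ n ≥ N, ∀ x ∈ Set.Icc (0 : ℝ) 1,
      (n : ℝ) * |(∑ k ∈ Finset.range (n + 1),
        ((round (f ((k : ℝ) / n) * (n.choose k : ℝ)) : ℝ)) * x ^ k * (1 - x) ^ (n - k)) - f x| ≤ ε) :
    ∃ p q : ℤ, ∀ x ∈ Set.Icc (0 : ℝ) 1, f x = (p : ℝ) * x + q := by
  obtain ⟨m0, hm0⟩ := h0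
  obtain ⟨m1, hm1⟩ := h1
  set a := f 0 with ha
  set b := f 1 - f 0 with hb
  have claim : ∀ x ∈ Set.Icc (0:ℝ) 1, f x = a + b * x := by
    by_contra hcon
    push_neg at hcon
    obtain ⟨xb, hxbI, hxbne⟩ := hcon
    -- xb is interior
    have hxb0 : xb ≠ 0 := by rintro rfl; apply hxbne; simp [ha]
    have hxb1 : xb ≠ 1 := by rintro rfl; apply hxbne; rw [ha, hb]; ring
    have hxbo : xb ∈ Set.Ioo (0:ℝ) 1 :=
      ⟨lt_of_le_of_ne hxbI.1 (Ne.symm hxb0), lt_of_le_of_ne hxbI.2 hxb1⟩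
    have hprod : xb * (1 - xb) < 1 := by nlinarith [hxbo.1, hxbo.2]
    have hprodpos : 0 < xb * (1 - xb) := by nlinarith [hxbo.1, hxbo.2]
    rcases lt_or_gt_of_ne hxbne with hlt | hgt
    · -- f xb < a + b xb : use minimum of g = f - ℓ + ε e
      set ε := (a + b * xb) - f xb with hεdef
      have hε : 0 < ε := by simp only [hεdef]; linarith
      set g : ℝ → ℝ := fun y => f y - (a + b*y) + ε*(y*(1-y)) with hg
      have hc1 : Continuous fun y : ℝ => a + b*y := by fun_prop
      have hc2 : Continuous fun y : ℝ => ε*(y*(1-y)) := by fun_prop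
      have hgc : ContinuousOn g (Set.Icc (0:ℝ) 1) := by
        rw [hg]; exact (hf.sub hc1.continuousOn).add hc2.continuousOn
      obtain ⟨x0, hx0I, hx0min⟩ := isCompact_Icc.exists_isMinOn (Set.nonempty_Icc.mpr zero_le_one)
        hgc
      have hgxb : g xb < 0 := by
        simp only [hg]
        nlinarith
      have hg0 : g 0 = 0 := by simp [hg, ha]
      have hg1 : g 1 = 0 := by simp only [hg, hb]; ring
      have hmin : ∀ y ∈ Set.Icc (0:ℝ) 1, g x0 ≤ g y := fun y hy => hx0min hy
      have hgx0 : g x0 < 0 := lt_of_le_of_lt (hmin xb hxbI) hgxb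
      have hx00 : x0 ≠ 0 := by rintro rfl; rw [hg0] at hgx0; linarith
      have hx01 : x0 ≠ 1 := by rintro rfl; rw [hg1] at hgx0; linarith
      have hx0o : x0 ∈ Set.Ioo (0:ℝ) 1 :=
        ⟨lt_of_le_of_ne hx0I.1 (Ne.symm hx00), lt_of_le_of_ne hx0I.2 hx01⟩
      set E := x0 * (1 - x0) with hE
      have hEpos : 0 < E := by nlinarith [hx0o.1, hx0o.2]
      set ε0 := ε * E with hε0
      have hε0pos : 0 < ε0 := mul_pos hε hEpos
      -- key inequality for all n ≥ 1
      have hineq : ∀ n : ℕ, 1 ≤ n →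
          ε0 ≤ (n:ℝ) * ((∑ k ∈ range (n+1),
            f ((k:ℝ)/n) * ((n.choose k:ℝ) * x0^k * (1-x0)^(n-k))) - f x0) := by
        intro n hn
        have hnR : (1:ℝ) ≤ (n:ℝ) := by exact_mod_cast hn
        have hnpos : (0:ℝ) < n := by linarith
        have hsum : g x0 ≤ ∑ k ∈ range (n+1),
            g ((k:ℝ)/n) * ((n.choose k:ℝ) * x0^k * (1-x0)^(n-k)) := by
          have : g x0 = ∑ k ∈ range (n+1),
              g x0 * ((n.choose k:ℝ) * x0^k * (1-x0)^(n-k)) := by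
            rw [← Finset.mul_sum, sumW, mul_one]
          rw [this]
          apply Finset.sum_le_sum
          intro k hk
          have hkn : k ≤ n := Nat.lt_succ_iff.mp (Finset.mem_range.mp hk)
          have hknI : (k:ℝ)/n ∈ Set.Icc (0:ℝ) 1 := by
            constructor
            · positivity
            · rw [div_le_one hnpos]; exact_mod_cast hkn
          exact mul_le_mul_of_nonneg_right (hmin _ hknI)
            (W_nonneg ⟨hx0o.1.le, hx0o.2.le⟩)
        have hexp := Bn_expand hn f a b (-ε) x0
        have hgk : ∀ k ∈ range (n+1), g ((k:ℝ)/n) * ((n.choose k:ℝ) * x0^k * (1-x0)^(n-k))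
            = (f ((k:ℝ)/n) - (a + b*((k:ℝ)/n)) - (-ε)*(((k:ℝ)/n)*(1-(k:ℝ)/n)))
              * ((n.choose k : ℝ) * x0^k * (1-x0)^(n-k)) := by
          intro k _; simp only [hg]; ring_nf
        rw [Finset.sum_congr rfl hgk, hexp] at hsum
        -- hsum : g x0 ≤ S - (a + b x0) + ε (1-1/n) E
        have hgx0' : g x0 = f x0 - (a + b*x0) + ε * E := by simp only [hg, hE]
        rw [hgx0'] at hsum
        have hn0 : (n:ℝ) ≠ 0 := by positivity
        have hExp : -ε * ((1 - 1/(n:ℝ)) * (x0*(1-x0))) = -(ε*E) + ε*E/(n:ℝ) := by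
          rw [hE]; field_simp; ring
        rw [hExp] at hsum
        have hstep : ε * E / n ≤ (∑ k ∈ range (n+1),
            f ((k:ℝ)/n) * ((n.choose k:ℝ) * x0^k * (1-x0)^(n-k))) - f x0 := by
          linarith [hsum]
        calc ε0 = (n:ℝ) * (ε * E / n) := by rw [hε0]; field_simp
          _ ≤ (n:ℝ) * ((∑ k ∈ range (n+1),
              f ((k:ℝ)/n) * ((n.choose k:ℝ) * x0^k * (1-x0)^(n-k))) - f x0) :=
            mul_le_mul_of_nonneg_left hstep (by positivity)
      obtain ⟨n, hn1, hsmall⟩ := Bn_limit f hlittle hx0o (show 0 < ε0/2 by linarith)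
      have := hineq n hn1
      rw [abs_le] at hsmall
      linarith [hsmall.2]
    · -- f xb > a + b xb : use maximum of g = f - ℓ - ε e
      set ε := f xb - (a + b * xb) with hεdef
      have hε : 0 < ε := by simp only [hεdef]; linarith
      set g : ℝ → ℝ := fun y => f y - (a + b*y) - ε*(y*(1-y)) with hg
      have hc1 : Continuous fun y : ℝ => a + b*y := by fun_prop
      have hc2 : Continuous fun y : ℝ => ε*(y*(1-y)) := by fun_prop
      have hgc : ContinuousOn g (Set.Icc (0:ℝ) 1) := by
        rw [hg]; exact (hf.sub hc1.continuousOn).sub hc2.continuousOn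
      obtain ⟨x0, hx0I, hx0max⟩ := isCompact_Icc.exists_isMaxOn (Set.nonempty_Icc.mpr zero_le_one)
        hgc
      have hgxb : 0 < g xb := by
        simp only [hg]
        nlinarith
      have hg0 : g 0 = 0 := by simp [hg, ha]
      have hg1 : g 1 = 0 := by simp only [hg, hb]; ring
      have hmax : ∀ y ∈ Set.Icc (0:ℝ) 1, g y ≤ g x0 := fun y hy => hx0max hy
      have hgx0 : 0 < g x0 := lt_of_lt_of_le hgxb (hmax xb hxbI)
      have hx00 : x0 ≠ 0 := by rintro rfl; rw [hg0] at hgx0; linarith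
      have hx01 : x0 ≠ 1 := by rintro rfl; rw [hg1] at hgx0; linarith
      have hx0o : x0 ∈ Set.Ioo (0:ℝ) 1 :=
        ⟨lt_of_le_of_ne hx0I.1 (Ne.symm hx00), lt_of_le_of_ne hx0I.2 hx01⟩
      set E := x0 * (1 - x0) with hE
      have hEpos : 0 < E := by nlinarith [hx0o.1, hx0o.2]
      set ε0 := ε * E with hε0
      have hε0pos : 0 < ε0 := mul_pos hε hEpos
      have hineq : ∀ n : ℕ, 1 ≤ n →
          (n:ℝ) * ((∑ k ∈ range (n+1),
            f ((k:ℝ)/n) * ((n.choose k:ℝ) * x0^k * (1-x0)^(n-k))) - f x0) ≤ -ε0 := by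
        intro n hn
        have hnR : (1:ℝ) ≤ (n:ℝ) := by exact_mod_cast hn
        have hnpos : (0:ℝ) < n := by linarith
        have hsum : ∑ k ∈ range (n+1),
            g ((k:ℝ)/n) * ((n.choose k:ℝ) * x0^k * (1-x0)^(n-k)) ≤ g x0 := by
          have heq1 : g x0 = ∑ k ∈ range (n+1),
              g x0 * ((n.choose k:ℝ) * x0^k * (1-x0)^(n-k)) := by
            rw [← Finset.mul_sum, sumW, mul_one]
          rw [heq1]
          apply Finset.sum_le_sum
          intro k hk
          have hkn : k ≤ n := Nat.lt_succ_iff.mp (Finset.mem_range.mp hk)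
          have hknI : (k:ℝ)/n ∈ Set.Icc (0:ℝ) 1 := by
            constructor
            · positivity
            · rw [div_le_one hnpos]; exact_mod_cast hkn
          exact mul_le_mul_of_nonneg_right (hmax _ hknI)
            (W_nonneg ⟨hx0o.1.le, hx0o.2.le⟩)
        have hexp := Bn_expand hn f a b ε x0
        have hgk : ∀ k ∈ range (n+1), g ((k:ℝ)/n) * ((n.choose k:ℝ) * x0^k * (1-x0)^(n-k))
            = (f ((k:ℝ)/n) - (a + b*((k:ℝ)/n)) - ε*(((k:ℝ)/n)*(1-(k:ℝ)/n)))
              * ((n.choose k : ℝ) * x0^k * (1-x0)^(n-k)) := by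
          intro k _; simp only [hg]
        rw [Finset.sum_congr rfl hgk, hexp] at hsum
        have hgx0' : g x0 = f x0 - (a + b*x0) - ε * E := by simp only [hg, hE]
        rw [hgx0'] at hsum
        have hn0 : (n:ℝ) ≠ 0 := by positivity
        have hExp : ε * ((1 - 1/(n:ℝ)) * (x0*(1-x0))) = ε*E - ε*E/(n:ℝ) := by
          rw [hE]; field_simp
        rw [hExp] at hsum
        have hstep : (∑ k ∈ range (n+1),
            f ((k:ℝ)/n) * ((n.choose k:ℝ) * x0^k * (1-x0)^(n-k))) - f x0 ≤ -(ε * E / n) := by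
          linarith [hsum]
        calc (n:ℝ) * ((∑ k ∈ range (n+1),
              f ((k:ℝ)/n) * ((n.choose k:ℝ) * x0^k * (1-x0)^(n-k))) - f x0)
            ≤ (n:ℝ) * (-(ε * E / n)) := mul_le_mul_of_nonneg_left hstep (by positivity)
          _ = -ε0 := by rw [hε0]; field_simp
      obtain ⟨n, hn1, hsmall⟩ := Bn_limit f hlittle hx0o (show 0 < ε0/2 by linarith)
      have := hineq n hn1
      rw [abs_le] at hsmall
      linarith [hsmall.1]
  refine ⟨m1 - m0, m0, ?_⟩
  intro x hx
  have hf0 : f 0 = (m0:ℝ) := by rw [← ha, hm0]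
  rw [claim x hx, hb, hm1, hf0, hm0]
  push_cast
  ring
end

section
/- Let s ≥ 1, n ≥ s+1, f ∈ C^s[0,1] and g ∈ C^{s+1}[0,1]. Suppose that for each k = 0, ..., n, the coefficient b(k) satisfies |f(k/n) - b(k)| ≤ M/n^s for some M > 0, and define Q(x) = Σ_{k=0}^n b(k) C(n,k) x^k (1-x)^{n-k}. Then for all x ∈ [0,1], |Q^{(s+1)}(x) - (B_n g)^{(s+1)}(x)| ≤ (2n)^{s+1}·(M/n^s) + n^{s+1}·sup_{y∈[0,1-(s+1)/n]}|Δ_{1/n}^{s+1}(f-g)(y)| ≤ (2n)^{s+1}·(M/n^s) + 2n·‖f^{(s)} - g^{(s)}‖_∞. -/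
open Finset Polynomial
open scoped fwdDiff

-- real-coefficient form of the iterated fwdDiff
lemma fwdDiff_iter_real (h : ℝ) (φ : ℝ → ℝ) (m : ℕ) (y : ℝ) :
    (fwdDiff h)^[m] φ y = ∑ i ∈ Finset.range (m + 1),
      (-1 : ℝ) ^ (m - i) * (m.choose i : ℝ) * φ (y + i * h) := by
  rw [fwdDiff_iter_eq_sum_shift]
  refine Finset.sum_congr rfl fun i hi => ?_
  rw [zsmul_eq_mul]
  push_cast [nsmul_eq_mul]
  ring

lemma fwdDiff_iter_nat (c : ℕ → ℝ) (m k : ℕ) :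
    (fwdDiff 1)^[m] c k = ∑ i ∈ Finset.range (m + 1),
      (-1 : ℝ) ^ (m - i) * (m.choose i : ℝ) * c (k + i) := by
  rw [fwdDiff_iter_eq_sum_shift]
  refine Finset.sum_congr rfl fun i hi => ?_
  rw [zsmul_eq_mul, smul_eq_mul, mul_one]
  push_cast
  ring


/-- (s+1)-th forward difference with step h. -/
noncomputable def fwdDiffStep (s : ℕ) (h : ℝ) (f : ℝ → ℝ) (x : ℝ) : ℝ :=
  ∑ i ∈ Finset.range (s + 1), (-1 : ℝ) ^ i * (s.choose i : ℝ) * f (x + ((s : ℝ) - i) * h)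

lemma fwdDiffStep_eq (m : ℕ) (h : ℝ) (φ : ℝ → ℝ) (x : ℝ) :
    fwdDiffStep m h φ x = (fwdDiff h)^[m] φ x := by
  rw [fwdDiff_iter_real, fwdDiffStep, ← Finset.sum_range_reflect]
  refine Finset.sum_congr rfl fun i hi => ?_
  rw [Finset.mem_range] at hi
  have hi' : i ≤ m := Nat.lt_succ_iff.mp hi
  have h1 : m + 1 - 1 - i = m - i := by omega
  rw [h1, Nat.choose_symm hi']
  congr 2
  push_cast [Nat.cast_sub hi']
  ring

lemma fwdDiff_nat_real (φ : ℝ → ℝ) (n : ℕ) (hn : 0 < n) (m k : ℕ) :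
    (fwdDiff 1)^[m] (fun j : ℕ => φ ((j : ℝ) / n)) k = (fwdDiff ((1:ℝ)/n))^[m] φ ((k : ℝ) / n) := by
  rw [fwdDiff_iter_nat, fwdDiff_iter_real]
  refine Finset.sum_congr rfl fun i _ => ?_
  congr 2
  have : (n:ℝ) ≠ 0 := Nat.cast_ne_zero.mpr hn.ne'
  push_cast
  field_simp

lemma fwdDiff_nat_bound (c : ℕ → ℝ) (m k : ℕ) (A : ℝ)
    (hA : ∀ i ≤ m, |c (k + i)| ≤ A) :
    |(fwdDiff 1)^[m] c k| ≤ 2 ^ m * A := by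
  rw [fwdDiff_iter_nat]
  calc |∑ i ∈ Finset.range (m+1), (-1:ℝ)^(m-i) * (m.choose i : ℝ) * c (k+i)|
      ≤ ∑ i ∈ Finset.range (m+1), |(-1:ℝ)^(m-i) * (m.choose i : ℝ) * c (k+i)| :=
        Finset.abs_sum_le_sum_abs _ _
    _ ≤ ∑ i ∈ Finset.range (m+1), (m.choose i : ℝ) * A := by
        refine Finset.sum_le_sum fun i hi => ?_
        rw [abs_mul, abs_mul, abs_pow, abs_neg, abs_one, one_pow, one_mul,
          Nat.abs_cast]
        exact mul_le_mul_of_nonneg_left (hA i (Nat.lt_succ_iff.mp (Finset.mem_range.mp hi)))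
          (Nat.cast_nonneg _)
    _ = 2 ^ m * A := by
        rw [← Finset.sum_mul]
        congr 1
        rw [← Nat.cast_sum, Nat.sum_range_choose]
        push_cast; ring

lemma bern_deriv_sum (m : ℕ) (d : ℕ → ℝ) :
    Polynomial.derivative (∑ k ∈ Finset.range (m + 1 + 1), d k • bernsteinPolynomial ℝ (m + 1) k)
      = ((m : ℝ) + 1) • ∑ k ∈ Finset.range (m + 1), (fwdDiff 1 d) k • bernsteinPolynomial ℝ m k := by
  have hz : bernsteinPolynomial ℝ m (m+1) = 0 :=
    bernsteinPolynomial.eq_zero_of_lt ℝ (Nat.lt_succ_self m)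
  have hcast : ((m + 1 : ℕ) : ℝ[X]) = Polynomial.C ((m : ℝ) + 1) := by
    rw [Nat.cast_add, Nat.cast_one, map_add, map_one, Polynomial.C_eq_natCast]
  rw [map_sum, Finset.sum_range_succ']
  simp only [Polynomial.derivative_smul, bernsteinPolynomial.derivative_succ,
    bernsteinPolynomial.derivative_zero, Nat.add_sub_cancel, hcast,
    ← Polynomial.smul_eq_C_mul, neg_mul, smul_neg, smul_sub, Finset.sum_sub_distrib,
    Finset.smul_sum, fwdDiff, sub_smul]
  simp only [smul_comm ((m:ℝ)+1)]
  have hsum : ∑ x ∈ Finset.range (m+1), d x • ((m:ℝ)+1) • bernsteinPolynomial ℝ m x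
      = ∑ x ∈ Finset.range (m+1), d (x+1) • ((m:ℝ)+1) • bernsteinPolynomial ℝ m (x+1)
        + d 0 • ((m:ℝ)+1) • bernsteinPolynomial ℝ m 0 := by
    rw [Finset.sum_range_succ', Finset.sum_range_succ, hz]
    simp
  rw [hsum]
  abel

lemma bern_iter_deriv (n : ℕ) (c : ℕ → ℝ) : ∀ j ≤ n,
    Polynomial.derivative^[j] (∑ k ∈ Finset.range (n + 1), c k • bernsteinPolynomial ℝ n k)
      = (n.descFactorial j : ℝ) •
        ∑ k ∈ Finset.range (n - j + 1), ((fwdDiff 1)^[j] c) k • bernsteinPolynomial ℝ (n - j) k := by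
  intro j
  induction j with
  | zero => intro _; simp
  | succ j ih =>
    intro hj
    have hj' : j ≤ n := by omega
    obtain ⟨m, hm⟩ : ∃ m, n - j = m + 1 := ⟨n - (j+1), by omega⟩
    rw [Function.iterate_succ_apply', ih hj', map_smul, hm, bern_deriv_sum]
    rw [smul_smul]
    have h1 : n - (j+1) = m := by omega
    rw [h1, ← Function.iterate_succ_apply' (fwdDiff 1) j c]
    congr 1
    rw [Nat.descFactorial_succ, hm]
    push_cast
    ring

lemma iteratedDeriv_polyEval (p : Polynomial ℝ) : ∀ (m : ℕ),
    iteratedDeriv m (fun y => p.eval y) = fun y => (Polynomial.derivative^[m] p).eval y := by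
  intro m
  induction m with
  | zero => simp
  | succ m ih =>
    rw [iteratedDeriv_succ, ih, Function.iterate_succ_apply']
    funext y
    exact Polynomial.deriv _

lemma lambda_eq_eval (n : ℕ) (c : ℕ → ℝ) :
    (fun y : ℝ => ∑ k ∈ Finset.range (n + 1),
        c k * (n.choose k : ℝ) * y ^ k * (1 - y) ^ (n - k))
      = fun y => (∑ k ∈ Finset.range (n + 1), c k • bernsteinPolynomial ℝ n k).eval y := by
  funext y
  rw [Polynomial.eval_finset_sum]
  refine Finset.sum_congr rfl fun k _ => ?_
  simp [bernsteinPolynomial]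
  ring

lemma repr_iterDeriv (n j : ℕ) (hj : j ≤ n) (c : ℕ → ℝ) (x : ℝ) :
    iteratedDeriv j (fun y : ℝ => ∑ k ∈ Finset.range (n + 1),
        c k * (n.choose k : ℝ) * y ^ k * (1 - y) ^ (n - k)) x
      = (n.descFactorial j : ℝ) * ∑ k ∈ Finset.range (n - j + 1),
          ((fwdDiff 1)^[j] c) k * (bernsteinPolynomial ℝ (n - j) k).eval x := by
  rw [lambda_eq_eval, iteratedDeriv_polyEval, bern_iter_deriv n c j hj]
  simp only [Polynomial.eval_smul, Polynomial.eval_finset_sum, smul_eq_mul]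

lemma bern_eval_nonneg (m k : ℕ) (x : ℝ) (hx : x ∈ Set.Icc (0:ℝ) 1) :
    0 ≤ (bernsteinPolynomial ℝ m k).eval x := by
  obtain ⟨h0, h1⟩ := hx
  simp only [bernsteinPolynomial, Polynomial.eval_mul, Polynomial.eval_pow,
    Polynomial.eval_natCast, Polynomial.eval_X, Polynomial.eval_sub, Polynomial.eval_one]
  have : (0:ℝ) ≤ 1 - x := by linarith
  positivity

lemma bern_eval_sum_one (m : ℕ) (x : ℝ) :
    ∑ k ∈ Finset.range (m + 1), (bernsteinPolynomial ℝ m k).eval x = 1 := by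
  rw [← Polynomial.eval_finset_sum, bernsteinPolynomial.sum]
  simp

lemma bern_comb_bound (m : ℕ) (a : ℕ → ℝ) (x : ℝ) (hx : x ∈ Set.Icc (0:ℝ) 1)
    (C : ℝ) (hC : ∀ k ≤ m, |a k| ≤ C) :
    |∑ k ∈ Finset.range (m + 1), a k * (bernsteinPolynomial ℝ m k).eval x| ≤ C := by
  calc |∑ k ∈ Finset.range (m + 1), a k * (bernsteinPolynomial ℝ m k).eval x|
      ≤ ∑ k ∈ Finset.range (m + 1), |a k * (bernsteinPolynomial ℝ m k).eval x| :=
        Finset.abs_sum_le_sum_abs _ _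
    _ ≤ ∑ k ∈ Finset.range (m + 1), C * (bernsteinPolynomial ℝ m k).eval x := by
        refine Finset.sum_le_sum fun k hk => ?_
        rw [abs_mul, abs_of_nonneg (bern_eval_nonneg m k x hx)]
        exact mul_le_mul_of_nonneg_right (hC k (Nat.lt_succ_iff.mp (Finset.mem_range.mp hk)))
          (bern_eval_nonneg m k x hx)
    _ = C := by rw [← Finset.mul_sum, bern_eval_sum_one, mul_one]

lemma hasDerivAt_fwdDiff_iter (φ : ℝ → ℝ) (hφ : Differentiable ℝ φ) (h : ℝ) (m : ℕ) (z : ℝ) :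
    HasDerivAt ((fwdDiff h)^[m] φ) ((fwdDiff h)^[m] (deriv φ) z) z := by
  have e : (fwdDiff h)^[m] φ = fun y => ∑ i ∈ Finset.range (m+1),
      (-1:ℝ)^(m-i) * (m.choose i : ℝ) * φ (y + i*h) := funext (fwdDiff_iter_real h φ m)
  rw [e, fwdDiff_iter_real]
  refine HasDerivAt.fun_sum fun i _ => ?_
  have hc : HasDerivAt (fun y : ℝ => φ (y + i*h)) (deriv φ (z + i*h)) z := by
    simpa [Function.comp_def] using (hφ (z + (i:ℝ)*h)).hasDerivAt.comp z ((hasDerivAt_id z).add_const ((i:ℝ)*h))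
  exact hc.const_mul _

lemma fwd_bound (h L : ℝ) (hh : 0 ≤ h) : ∀ (m : ℕ) (φ : ℝ → ℝ), ContDiff ℝ m φ →
    ∀ (E : ℝ), (∀ t ∈ Set.Icc (0:ℝ) L, |iteratedDeriv m φ t| ≤ E) →
    ∀ z, 0 ≤ z → z + m * h ≤ L → |(fwdDiff h)^[m] φ z| ≤ E * h ^ m := by
  intro m
  induction m with
  | zero =>
    intro φ _ E hE z hz hzL
    simpa using hE z ⟨hz, by simpa using hzL⟩
  | succ m ih =>
    intro φ hφ E hE z hz hzL
    have hdiff : Differentiable ℝ φ := hφ.differentiable (by simp)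
    have hφ' : ContDiff ℝ m (deriv φ) := by
      have := (contDiff_succ_iff_deriv (n := m)).mp (by exact_mod_cast hφ)
      exact this.2.2
    have hE' : ∀ t ∈ Set.Icc (0:ℝ) L, |iteratedDeriv m (deriv φ) t| ≤ E := by
      intro t ht
      rw [← iteratedDeriv_succ']
      exact hE t ht
    rw [Function.iterate_succ_apply', fwdDiff]
    have hkey : ∀ t ∈ Set.Icc z (z + h), ‖(fwdDiff h)^[m] (deriv φ) t‖ ≤ E * h ^ m := by
      intro t ht
      rw [Real.norm_eq_abs]
      refine ih (deriv φ) hφ' E hE' t (le_trans hz ht.1) ?_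
      have : t ≤ z + h := ht.2
      have hcast : ((m:ℝ)+1) * h = (m:ℝ) * h + h := by ring
      push_cast at hzL
      nlinarith [hzL]
    have hconv : Convex ℝ (Set.Icc z (z + h)) := convex_Icc _ _
    have hderiv : ∀ t ∈ Set.Icc z (z + h),
        HasDerivWithinAt ((fwdDiff h)^[m] φ) ((fwdDiff h)^[m] (deriv φ) t) (Set.Icc z (z+h)) t :=
      fun t _ => (hasDerivAt_fwdDiff_iter φ hdiff h m t).hasDerivWithinAt
    have := hconv.norm_image_sub_le_of_norm_hasDerivWithin_le hderiv hkey
      (Set.left_mem_Icc.mpr (by linarith)) (Set.right_mem_Icc.mpr (by linarith))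
    rw [Real.norm_eq_abs, add_sub_cancel_left, Real.norm_eq_abs, abs_of_nonneg hh] at this
    calc |(fwdDiff h)^[m] φ (z + h) - (fwdDiff h)^[m] φ z| ≤ E * h ^ m * h := this
      _ = E * h ^ (m+1) := by ring

lemma iteratedDeriv_sub' {m : ℕ} {f g : ℝ → ℝ} (hf : ContDiff ℝ m f) (hg : ContDiff ℝ m g)
    (x : ℝ) :
    iteratedDeriv m (fun t => f t - g t) x = iteratedDeriv m f x - iteratedDeriv m g x := by
  have h1 : (fun t => f t - g t) = f + (-g) := by funext t; simp [sub_eq_add_neg]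
  simp only [iteratedDeriv_eq_iteratedFDeriv, h1]
  rw [iteratedFDeriv_add_apply (g := -g) hf.contDiffAt hg.neg.contDiffAt, iteratedFDeriv_neg_apply]
  simp [sub_eq_add_neg]

lemma fwdDiff_iter_sub (p q : ℕ → ℝ) (m : ℕ) :
    (fwdDiff (1:ℕ))^[m] (p - q) = (fwdDiff 1)^[m] p - (fwdDiff 1)^[m] q := by
  have h := fwdDiff_iter_add (1:ℕ) (p - q) q m
  rw [sub_add_cancel] at h
  rw [h]
  abel

lemma main_part1 (s n : ℕ) (hn : s + 1 ≤ n)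
    (f g : ℝ → ℝ) (b : ℕ → ℝ) (M : ℝ) (hM : 0 < M)
    (hb : ∀ k ≤ n, |f ((k:ℝ)/n) - b k| ≤ M / (n:ℝ)^s)
    (D : ℝ)
    (hD : ∀ y ∈ Set.Icc (0:ℝ) (1 - ((s:ℝ)+1)/n),
      |fwdDiffStep (s+1) (1/n) (fun t => f t - g t) y| ≤ D)
    (x : ℝ) (hx : x ∈ Set.Icc (0:ℝ) 1) :
    |iteratedDeriv (s+1) (fun y : ℝ => ∑ k ∈ Finset.range (n+1),
        b k * (n.choose k:ℝ) * y^k * (1-y)^(n-k)) x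
      - iteratedDeriv (s+1) (fun y : ℝ => ∑ k ∈ Finset.range (n+1),
        g ((k:ℝ)/n) * (n.choose k:ℝ) * y^k * (1-y)^(n-k)) x|
    ≤ (2*(n:ℝ))^(s+1) * (M/(n:ℝ)^s) + (n:ℝ)^(s+1) * D := by
  have hn0 : 0 < n := by omega
  have hn0' : (0:ℝ) < n := Nat.cast_pos.mpr hn0
  have hD0 : 0 ≤ D := by
    refine le_trans (abs_nonneg _) (hD 0 ⟨le_refl 0, ?_⟩)
    rw [sub_nonneg, div_le_one hn0']
    exact_mod_cast hn
  set C : ℝ := 2^(s+1) * (M/(n:ℝ)^s) + D with hC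
  have hC0 : 0 ≤ C := by positivity
  have e1 := repr_iterDeriv n (s+1) hn b x
  have e2 := repr_iterDeriv n (s+1) hn (fun k => g ((k:ℝ)/n)) x
  rw [e1, e2, ← mul_sub, ← Finset.sum_sub_distrib]
  have hsplit : ∀ k ∈ Finset.range (n - (s+1) + 1),
      (fwdDiff 1)^[s+1] b k * (bernsteinPolynomial ℝ (n-(s+1)) k).eval x
        - (fwdDiff 1)^[s+1] (fun j : ℕ => g ((j:ℝ)/n)) k * (bernsteinPolynomial ℝ (n-(s+1)) k).eval x
      = ((fwdDiff 1)^[s+1] (b - fun j : ℕ => g ((j:ℝ)/n))) k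
          * (bernsteinPolynomial ℝ (n-(s+1)) k).eval x := by
    intro k _
    rw [fwdDiff_iter_sub, Pi.sub_apply, sub_mul]
  rw [Finset.sum_congr rfl hsplit]
  have habs : ∀ k ≤ n - (s+1),
      |((fwdDiff 1)^[s+1] (b - fun j : ℕ => g ((j:ℝ)/n))) k| ≤ C := by
    intro k hk
    have hdecomp : (b - fun j : ℕ => g ((j:ℝ)/n))
        = (fun j : ℕ => b j - f ((j:ℝ)/n)) + (fun j : ℕ => f ((j:ℝ)/n) - g ((j:ℝ)/n)) := by
      funext j; simp
    rw [hdecomp, fwdDiff_iter_add, Pi.add_apply]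
    have h1 : |(fwdDiff 1)^[s+1] (fun j : ℕ => b j - f ((j:ℝ)/n)) k| ≤ 2^(s+1) * (M/(n:ℝ)^s) := by
      refine fwdDiff_nat_bound _ _ _ _ fun i hi => ?_
      rw [abs_sub_comm]
      exact hb (k+i) (by omega)
    have h2 : |(fwdDiff 1)^[s+1] (fun j : ℕ => f ((j:ℝ)/n) - g ((j:ℝ)/n)) k| ≤ D := by
      have hb2 := fwdDiff_nat_real (fun t => f t - g t) n hn0 (s+1) k
      rw [hb2, ← fwdDiffStep_eq]
      refine hD _ ⟨by positivity, ?_⟩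
      rw [le_sub_iff_add_le, ← add_div, div_le_one hn0']
      have : k + (s+1) ≤ n := by omega
      exact_mod_cast this
    calc |(fwdDiff 1)^[s+1] (fun j : ℕ => b j - f ((j:ℝ)/n)) k
          + (fwdDiff 1)^[s+1] (fun j : ℕ => f ((j:ℝ)/n) - g ((j:ℝ)/n)) k|
        ≤ _ + _ := abs_add_le _ _
      _ ≤ 2^(s+1) * (M/(n:ℝ)^s) + D := add_le_add h1 h2
  have hbound := bern_comb_bound (n - (s+1)) _ x hx C habs
  have hdf : (n.descFactorial (s+1) : ℝ) ≤ (n:ℝ)^(s+1) := by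
    exact_mod_cast Nat.descFactorial_le_pow n (s+1)
  calc |(n.descFactorial (s+1) : ℝ) * ∑ k ∈ Finset.range (n - (s+1) + 1),
          ((fwdDiff 1)^[s+1] (b - fun j : ℕ => g ((j:ℝ)/n))) k
            * (bernsteinPolynomial ℝ (n-(s+1)) k).eval x|
      = (n.descFactorial (s+1) : ℝ) * |∑ k ∈ Finset.range (n - (s+1) + 1),
          ((fwdDiff 1)^[s+1] (b - fun j : ℕ => g ((j:ℝ)/n))) k
            * (bernsteinPolynomial ℝ (n-(s+1)) k).eval x| := by
        rw [abs_mul, Nat.abs_cast]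
    _ ≤ (n.descFactorial (s+1) : ℝ) * C :=
        mul_le_mul_of_nonneg_left hbound (Nat.cast_nonneg _)
    _ ≤ (n:ℝ)^(s+1) * C := mul_le_mul_of_nonneg_right hdf hC0
    _ = (2*(n:ℝ))^(s+1) * (M/(n:ℝ)^s) + (n:ℝ)^(s+1) * D := by
        rw [hC, mul_pow]
        ring

lemma main_part2_D (s n : ℕ) (hn : s + 1 ≤ n) (f g : ℝ → ℝ)
    (hf : ContDiff ℝ s f) (hgs : ContDiff ℝ s g) (E : ℝ)
    (hE : ∀ y ∈ Set.Icc (0:ℝ) 1, |iteratedDeriv s f y - iteratedDeriv s g y| ≤ E) :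
    ∀ y ∈ Set.Icc (0:ℝ) (1 - ((s:ℝ)+1)/n),
      |fwdDiffStep (s+1) (1/n) (fun t => f t - g t) y| ≤ 2 * E * (1/(n:ℝ))^s := by
  intro y hy
  have hn0 : 0 < n := by omega
  have hn0' : (0:ℝ) < n := Nat.cast_pos.mpr hn0
  have hh : (0:ℝ) ≤ 1/n := by positivity
  have hφs : ContDiff ℝ s (fun t => f t - g t) := hf.sub hgs
  have hEφ : ∀ t ∈ Set.Icc (0:ℝ) 1, |iteratedDeriv s (fun t => f t - g t) t| ≤ E := by
    intro t ht
    rw [iteratedDeriv_sub' hf hgs t]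
    exact hE t ht
  obtain ⟨hy0, hy1⟩ := hy
  have hy1' : y + ((s:ℝ)+1) / n ≤ 1 := by linarith
  have hadd : ((s:ℝ)+1)/n = (s:ℝ)/n + 1/n := by ring
  have hsn : (s:ℝ) * (1/n) = (s:ℝ)/n := by ring
  rw [fwdDiffStep_eq, Function.iterate_succ_apply', fwdDiff]
  have b1 := fwd_bound (1/n) 1 hh s (fun t => f t - g t) hφs E hEφ y hy0
    (by rw [hsn]; linarith [hadd ▸ hy1'])
  have b2 := fwd_bound (1/n) 1 hh s (fun t => f t - g t) hφs E hEφ (y + 1/n)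
    (by linarith) (by rw [hsn]; linarith [hadd ▸ hy1'])
  calc |(fwdDiff (1/(n:ℝ)))^[s] (fun t => f t - g t) (y + 1/n)
        - (fwdDiff (1/(n:ℝ)))^[s] (fun t => f t - g t) y|
      ≤ |(fwdDiff (1/(n:ℝ)))^[s] (fun t => f t - g t) (y + 1/n)|
        + |(fwdDiff (1/(n:ℝ)))^[s] (fun t => f t - g t) y| := abs_sub _ _
    _ ≤ E * (1/n)^s + E * (1/n)^s := add_le_add b2 b1
    _ = 2 * E * (1/(n:ℝ))^s := by ring

theorem quasi_linearity_estimate (s n : ℕ) (hs : 1 ≤ s) (hn : s + 1 ≤ n)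
    (f g : ℝ → ℝ) (hf : ContDiff ℝ s f) (hg : ContDiff ℝ (s + 1) g)
    (b : ℕ → ℝ) (M : ℝ) (hM : 0 < M)
    (hb : ∀ k ≤ n, |f ((k : ℝ) / n) - b k| ≤ M / (n : ℝ) ^ s) :
    (∀ D : ℝ, (∀ y ∈ Set.Icc (0 : ℝ) (1 - ((s : ℝ) + 1) / n),
        |fwdDiffStep (s + 1) (1 / n) (fun t => f t - g t) y| ≤ D) →
      ∀ x ∈ Set.Icc (0 : ℝ) 1,
        |iteratedDeriv (s + 1)
            (fun y : ℝ => ∑ k ∈ Finset.range (n + 1),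
              b k * (n.choose k : ℝ) * y ^ k * (1 - y) ^ (n - k)) x -
          iteratedDeriv (s + 1)
            (fun y : ℝ => ∑ k ∈ Finset.range (n + 1),
              g ((k : ℝ) / n) * (n.choose k : ℝ) * y ^ k * (1 - y) ^ (n - k)) x| ≤
        (2 * (n : ℝ)) ^ (s + 1) * (M / (n : ℝ) ^ s) + (n : ℝ) ^ (s + 1) * D) ∧
    (∀ E : ℝ, (∀ y ∈ Set.Icc (0 : ℝ) 1, |iteratedDeriv s f y - iteratedDeriv s g y| ≤ E) →
      ∀ x ∈ Set.Icc (0 : ℝ) 1,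
        |iteratedDeriv (s + 1)
            (fun y : ℝ => ∑ k ∈ Finset.range (n + 1),
              b k * (n.choose k : ℝ) * y ^ k * (1 - y) ^ (n - k)) x -
          iteratedDeriv (s + 1)
            (fun y : ℝ => ∑ k ∈ Finset.range (n + 1),
              g ((k : ℝ) / n) * (n.choose k : ℝ) * y ^ k * (1 - y) ^ (n - k)) x| ≤
        (2 * (n : ℝ)) ^ (s + 1) * (M / (n : ℝ) ^ s) + 2 * (n : ℝ) * E) := by
  have hn0' : (0:ℝ) < n := by exact_mod_cast Nat.lt_of_lt_of_le (Nat.succ_pos s) hn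
  constructor
  · intro D hD x hx
    exact main_part1 s n hn f g b M hM hb D hD x hx
  · intro E hE x hx
    have hgs : ContDiff ℝ s g := hg.of_le (by exact_mod_cast le_self_add)
    have hD := main_part2_D s n hn f g hf hgs E hE
    have h := main_part1 s n hn f g b M hM hb _ hD x hx
    refine h.trans (le_of_eq ?_)
    congr 1
    have hns : ((n:ℝ))^s ≠ 0 := by positivity
    rw [pow_succ]
    field_simp
    ring
    rw [inv_pow, mul_assoc, mul_comm E, ← mul_assoc, mul_inv_cancel₀ hns, one_mul]
end
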